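/- Let β ∈ ℝ, D > 0, and let φ : ℝ² → ℝ be continuous. Let P₁, P₂, P₃ ∈ ℝ² be the vertices of a nondegenerate triangle (P₂ − P₁ and P₃ − P₁ linearly independent), and let M₁ = (P₁+P₂)/2, M₂ = (P₂+P₃)/2, M₃ = (P₃+P₁)/2 be the three edge midpoints. Define F₁(v) = ℱ(v; M₁, M₂) and F₂(v) = ℱ(v; M₁, M₃) for constant vector fields v ∈ ℝ². Then M₂ − M₁ and M₃ − M₁ are linearly independent, and the 2×2 matrix with entries F_{ji} = F_j(e_i) is nonsingular; equivalently F₁(v) = F₂(v) = 0 implies v = 0. -/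

import Mathlib

open MeasureTheory intervalIntegral
open scoped RealInnerProductSpace

/-- The exponentially weighted line functional `ℱ(v; P, Q)` of a constant vector field `v`
along the segment from `P` to `Q`:
`ℱ(v; P, Q) = (e^{−βφ(Q)}/D) ∫₀^S e^{βφ(P + s·n)} (v · n) ds`,
where `S = ‖Q − P‖` and `n = (Q − P)/S`. -/
noncomputable def expFitFunctional (β D : ℝ) (φ : EuclideanSpace ℝ (Fin 2) → ℝ)
    (v P Q : EuclideanSpace ℝ (Fin 2)) : ℝ :=
  (Real.exp (-(β * φ Q)) / D) *
    ∫ s in (0:ℝ)..‖Q - P‖,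
      Real.exp (β * φ (P + s • (‖Q - P‖⁻¹ • (Q - P)))) * ⟪v, ‖Q - P‖⁻¹ • (Q - P)⟫

lemma expFit_eq (β D : ℝ) (hD : 0 < D) (φ : EuclideanSpace ℝ (Fin 2) → ℝ)
    (hφ : Continuous φ) (P Q : EuclideanSpace ℝ (Fin 2)) (h : Q ≠ P) :
    ∃ C : ℝ, 0 < C ∧ ∀ v, expFitFunctional β D φ v P Q = C * ⟪v, Q - P⟫ := by
  have hS : 0 < ‖Q - P‖ := by simpa [sub_ne_zero] using h
  set S := ‖Q - P‖ with hSdef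
  set n : EuclideanSpace ℝ (Fin 2) := S⁻¹ • (Q - P) with hn
  have hcont : Continuous fun s : ℝ => Real.exp (β * φ (P + s • n)) :=
    Real.continuous_exp.comp <| continuous_const.mul
      (hφ.comp (continuous_const.add (continuous_id.smul continuous_const)))
  have hI : 0 < ∫ s in (0:ℝ)..S, Real.exp (β * φ (P + s • n)) :=
    intervalIntegral.intervalIntegral_pos_of_pos_on
      (hcont.intervalIntegrable _ _) (fun s _ => Real.exp_pos _) hS
  refine ⟨(Real.exp (-(β * φ Q)) / D) *
      (∫ s in (0:ℝ)..S, Real.exp (β * φ (P + s • n))) * S⁻¹,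
    mul_pos (mul_pos (div_pos (Real.exp_pos _) hD) hI) (inv_pos.mpr hS), fun v => ?_⟩
  have hinner : ⟪v, n⟫ = S⁻¹ * ⟪v, Q - P⟫ := real_inner_smul_right v _ _
  unfold expFitFunctional
  rw [← hSdef, ← hn]
  simp_rw [hinner]
  rw [intervalIntegral.integral_mul_const]
  ring

/-- For a nondegenerate triangle with vertices `P₁, P₂, P₃` and edge midpoints
`M₁ = (P₁+P₂)/2`, `M₂ = (P₂+P₃)/2`, `M₃ = (P₃+P₁)/2`, the vectors `M₂ − M₁` and `M₃ − M₁`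
are linearly independent, and the 2×2 matrix with entries `F_{ji} = F_j(e_i)`,
where `F₁(v) = ℱ(v; M₁, M₂)`, `F₂(v) = ℱ(v; M₁, M₃)` and `e₁ = (1,0)`, `e₂ = (0,1)`,
is nonsingular; equivalently `F₁(v) = F₂(v) = 0` implies `v = 0`. -/
theorem expFit_interpolation_matrix_nonsingular_midpoints
    (β D : ℝ) (hD : 0 < D) (φ : EuclideanSpace ℝ (Fin 2) → ℝ) (hφ : Continuous φ)
    (P₁ P₂ P₃ : EuclideanSpace ℝ (Fin 2))
    (hind : LinearIndependent ℝ ![P₂ - P₁, P₃ - P₁])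
    (M₁ M₂ M₃ : EuclideanSpace ℝ (Fin 2))
    (hM₁ : M₁ = (2:ℝ)⁻¹ • (P₁ + P₂)) (hM₂ : M₂ = (2:ℝ)⁻¹ • (P₂ + P₃))
    (hM₃ : M₃ = (2:ℝ)⁻¹ • (P₃ + P₁)) :
    LinearIndependent ℝ ![M₂ - M₁, M₃ - M₁] ∧
    Matrix.det
      !![expFitFunctional β D φ (EuclideanSpace.single 0 1) M₁ M₂,
         expFitFunctional β D φ (EuclideanSpace.single 1 1) M₁ M₂;
         expFitFunctional β D φ (EuclideanSpace.single 0 1) M₁ M₃,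
         expFitFunctional β D φ (EuclideanSpace.single 1 1) M₁ M₃] ≠ 0 ∧
    ∀ v : EuclideanSpace ℝ (Fin 2),
      expFitFunctional β D φ v M₁ M₂ = 0 → expFitFunctional β D φ v M₁ M₃ = 0 → v = 0 := by
  have hpair := LinearIndependent.pair_iff.mp (by simpa using hind)
  have hu₁ : M₂ - M₁ = (2:ℝ)⁻¹ • (P₃ - P₁) := by rw [hM₁, hM₂]; module
  have hu₂ : M₃ - M₁ = (2:ℝ)⁻¹ • (P₃ - P₁) - (2:ℝ)⁻¹ • (P₂ - P₁) := by
    rw [hM₁, hM₃]; module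
  have hli : LinearIndependent ℝ ![M₂ - M₁, M₃ - M₁] := by
    rw [LinearIndependent.pair_iff]
    intro s t hst
    rw [hu₁, hu₂] at hst
    have h2 : (-(t * (2:ℝ)⁻¹)) • (P₂ - P₁) + ((s + t) * (2:ℝ)⁻¹) • (P₃ - P₁) = 0 := by
      rw [show (-(t * (2:ℝ)⁻¹)) • (P₂ - P₁) + ((s + t) * (2:ℝ)⁻¹) • (P₃ - P₁)
          = s • ((2:ℝ)⁻¹ • (P₃ - P₁)) + t • ((2:ℝ)⁻¹ • (P₃ - P₁) - (2:ℝ)⁻¹ • (P₂ - P₁))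
          from by module]
      exact hst
    obtain ⟨h3, h4⟩ := hpair _ _ h2
    constructor <;> [skip; skip] <;> linarith [h3, h4]
  -- nonzero differences
  have hne₁ : M₂ ≠ M₁ := by
    have := hli.ne_zero 0
    simp only [Matrix.cons_val_zero] at this
    exact fun h => this (by rw [h, sub_self])
  have hne₂ : M₃ ≠ M₁ := by
    have := hli.ne_zero 1
    simp only [Matrix.cons_val_one, Matrix.head_cons] at this
    exact fun h => this (by rw [h, sub_self]; rfl)
  obtain ⟨C₁, hC₁pos, hC₁⟩ := expFit_eq β D hD φ hφ M₁ M₂ hne₁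
  obtain ⟨C₂, hC₂pos, hC₂⟩ := expFit_eq β D hD φ hφ M₁ M₃ hne₂
  -- part 3
  have part3 : ∀ v : EuclideanSpace ℝ (Fin 2),
      expFitFunctional β D φ v M₁ M₂ = 0 → expFitFunctional β D φ v M₁ M₃ = 0 → v = 0 := by
    intro v h1 h2
    have hv1 : ⟪v, M₂ - M₁⟫ = 0 := by
      have := (hC₁ v).symm.trans h1
      rcases mul_eq_zero.mp this with h | h
      · exact absurd h hC₁pos.ne'
      · exact h
    have hv2 : ⟪v, M₃ - M₁⟫ = 0 := by
      have := (hC₂ v).symm.trans h2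
      rcases mul_eq_zero.mp this with h | h
      · exact absurd h hC₂pos.ne'
      · exact h
    have hspan : Submodule.span ℝ ({M₂ - M₁, M₃ - M₁} :
        Set (EuclideanSpace ℝ (Fin 2))) = ⊤ := by
      have := hli.span_eq_top_of_card_eq_finrank (by simp)
      rw [show Set.range ![M₂ - M₁, M₃ - M₁] = {M₂ - M₁, M₃ - M₁} from by
        ext x; simp [Fin.exists_fin_two, or_comm]] at this
      exact this
    have hv : v ∈ Submodule.span ℝ ({M₂ - M₁, M₃ - M₁} :
        Set (EuclideanSpace ℝ (Fin 2))) := hspan ▸ Submodule.mem_top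
    obtain ⟨a, b, hab⟩ := Submodule.mem_span_pair.mp hv
    have : ⟪v, v⟫ = 0 := by
      nth_rewrite 2 [← hab]
      rw [inner_add_right, real_inner_smul_right, real_inner_smul_right, hv1, hv2]
      ring
    exact inner_self_eq_zero.mp this
  refine ⟨hli, ?_, part3⟩
  -- part 2 by contradiction
  intro hdet
  obtain ⟨w, hw0, hw⟩ := Matrix.exists_mulVec_eq_zero_iff.mpr hdet
  set v : EuclideanSpace ℝ (Fin 2) := (WithLp.equiv 2 (Fin 2 → ℝ)).symm w with hvdef
  have hvw : ∀ i, v i = w i := fun i => rfl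
  have hinner : ∀ u : EuclideanSpace ℝ (Fin 2), ⟪v, u⟫ = w 0 * u 0 + w 1 * u 1 := by
    intro u
    rw [PiLp.inner_apply, Fin.sum_univ_two]
    simp [hvw]; ring
  have hsingle : ∀ (i : Fin 2) (u : EuclideanSpace ℝ (Fin 2)),
      ⟪(EuclideanSpace.single i (1:ℝ) : EuclideanSpace ℝ (Fin 2)), u⟫ = u i := by
    intro i u; rw [EuclideanSpace.inner_single_left]; simp
  have h0 := congrFun hw 0
  have h1 := congrFun hw 1
  simp [Matrix.mulVec, dotProduct, Fin.sum_univ_two] at h0 h1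
  rw [hC₁ _, hC₁ _, hsingle, hsingle] at h0
  rw [hC₂ _, hC₂ _, hsingle, hsingle] at h1
  have hF1 : expFitFunctional β D φ v M₁ M₂ = 0 := by
    rw [hC₁ v, hinner]; linear_combination h0
  have hF2 : expFitFunctional β D φ v M₁ M₃ = 0 := by
    rw [hC₂ v, hinner]; linear_combination h1
  have := part3 v hF1 hF2
  apply hw0
  ext i
  have : v i = 0 := by rw [this]; rfl
  simpa [hvw] using this
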